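/- Under the affine structural decomposition, the conditional variance of the futures price equals Var[F_t(τ_1,τ_2) | Y_t = y] = (1/(τ_2−τ_1))² ∬_{[τ_1,τ_2]²} (w_t^X(u,s) − 1) · g(A_t^u y + B_t^u) g(A_t^s y + B_t^s) du ds. -/

import Mathlib

open MeasureTheory ProbabilityTheory

/-- Under the affine structural decomposition, the conditional variance
of the futures price F_t(τ₁,τ₂) = (τ₂−τ₁)⁻¹ ∫_{τ₁}^{τ₂} X_t^u g(A_t^u y + B_t^u) du
(conditioning on Y_t = y replaces Y_t by y, by independence of X and Y) equals
(τ₂−τ₁)⁻² ∬ (w_t^X(u,s) − 1) g(A_t^u y + B_t^u) g(A_t^s y + B_t^s) du ds, with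
w_t^X(u,s) = E[X_t^u X_t^s] = exp((1/2)∫₀ᵗ (Σ(v,u)ᵀΣ(v,s) + Σ(v,s)ᵀΣ(v,u)) dv). -/
theorem futures_price_conditional_variance
    {Ω : Type*} {m0 : MeasurableSpace Ω} (μ : Measure Ω) [IsProbabilityMeasure μ]
    {n : ℕ} {m : ℕ} (t τ₁ τ₂ : ℝ) (ht : 0 ≤ t) (htτ : t ≤ τ₁) (hτ : τ₁ < τ₂)
    (σv : ℝ → ℝ → EuclideanSpace ℝ (Fin m))
    (X : ℝ → Ω → ℝ)
    (hXmean : ∀ u : ℝ, ∫ ω, X u ω ∂μ = 1)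
    (hXcross : ∀ u s : ℝ, ∫ ω, X u ω * X s ω ∂μ =
      Real.exp ((1 / 2) * ∫ v in (0:ℝ)..t,
        ((inner ℝ (σv u v) (σv s v) : ℝ) + (inner ℝ (σv s v) (σv u v) : ℝ))))
    (g : (Fin n → ℝ) → ℝ)
    (A : ℝ → Matrix (Fin n) (Fin n) ℝ) (B : ℝ → Fin n → ℝ) (y : Fin n → ℝ)
    (hint1 : Integrable (Function.uncurry fun u ω => X u ω * g ((A u).mulVec y + B u))
      ((volume.restrict (Set.Icc τ₁ τ₂)).prod μ))
    (hint2 : Integrable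
      (fun p : (ℝ × ℝ) × Ω => X p.1.1 p.2 * g ((A p.1.1).mulVec y + B p.1.1) *
        (X p.1.2 p.2 * g ((A p.1.2).mulVec y + B p.1.2)))
      (((volume.restrict (Set.Icc τ₁ τ₂)).prod (volume.restrict (Set.Icc τ₁ τ₂))).prod μ)) :
    variance (fun ω => (τ₂ - τ₁)⁻¹ * ∫ u in τ₁..τ₂, X u ω * g ((A u).mulVec y + B u)) μ =
      ((τ₂ - τ₁)⁻¹) ^ 2 * ∫ u in τ₁..τ₂, ∫ s in τ₁..τ₂,
        (Real.exp ((1 / 2) * ∫ v in (0:ℝ)..t,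
            ((inner ℝ (σv u v) (σv s v) : ℝ) + (inner ℝ (σv s v) (σv u v) : ℝ))) - 1) *
        (g ((A u).mulVec y + B u) * g ((A s).mulVec y + B s)) := by
  set ν := volume.restrict (Set.Icc τ₁ τ₂) with hν
  set f : ℝ → ℝ := fun u => g ((A u).mulVec y + B u) with hf
  set w : ℝ → ℝ → ℝ := fun u s => Real.exp ((1 / 2) * ∫ v in (0:ℝ)..t,
      ((inner ℝ (σv u v) (σv s v) : ℝ) + (inner ℝ (σv s v) (σv u v) : ℝ))) with hw
  set h : ℝ → Ω → ℝ := fun u ω => X u ω * f u with hh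
  set c : ℝ := (τ₂ - τ₁)⁻¹ with hc
  -- interval integral to ν integral
  have hIcc : ∀ (F : ℝ → ℝ), (∫ u in τ₁..τ₂, F u) = ∫ u, F u ∂ν := by
    intro F
    rw [intervalIntegral.integral_of_le hτ.le, hν, ← integral_Icc_eq_integral_Ioc]
  have hI1 : Integrable (Function.uncurry h) (ν.prod μ) := hint1
  have hI2 : Integrable (fun p : (ℝ × ℝ) × Ω => h p.1.1 p.2 * h p.1.2 p.2)
      ((ν.prod ν).prod μ) := hint2
  -- pointwise ω-integrals
  have hωu : ∀ u, (∫ ω, h u ω ∂μ) = f u := by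
    intro u
    simp only [hh, integral_mul_const, hXmean u, one_mul]
  have hωus : ∀ u s, (∫ ω, h u ω * h s ω ∂μ) = w u s * (f u * f s) := by
    intro u s
    have : (fun ω => h u ω * h s ω) = fun ω => (X u ω * X s ω) * (f u * f s) := by
      funext ω; simp only [hh]; ring
    rw [this, integral_mul_const, hXcross u s, hw, mul_comm]
  -- the integrand process
  set I : Ω → ℝ := fun ω => ∫ u, h u ω ∂ν with hI
  -- mean
  have hmean : (∫ ω, I ω ∂μ) = ∫ u, f u ∂ν := by
    rw [hI]
    rw [← integral_integral_swap hI1]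
    exact integral_congr_ae (Filter.Eventually.of_forall fun u => hωu u)
  -- square as product integral
  have hsq : ∀ ω, I ω ^ 2 = ∫ p : ℝ × ℝ, h p.1 ω * h p.2 ω ∂(ν.prod ν) := by
    intro ω
    rw [sq, ← integral_prod_mul (fun u => h u ω) (fun s => h s ω)]
  -- second moment
  have hsec : (∫ ω, I ω ^ 2 ∂μ) = ∫ p : ℝ × ℝ, w p.1 p.2 * (f p.1 * f p.2) ∂(ν.prod ν) := by
    calc (∫ ω, I ω ^ 2 ∂μ)
        = ∫ ω, ∫ p : ℝ × ℝ, h p.1 ω * h p.2 ω ∂(ν.prod ν) ∂μ :=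
          integral_congr_ae (Filter.Eventually.of_forall fun ω => hsq ω)
      _ = ∫ p : ℝ × ℝ, ∫ ω, h p.1 ω * h p.2 ω ∂μ ∂(ν.prod ν) :=
          (integral_integral_swap (f := fun (p : ℝ × ℝ) ω => h p.1 ω * h p.2 ω) hI2).symm
      _ = ∫ p : ℝ × ℝ, w p.1 p.2 * (f p.1 * f p.2) ∂(ν.prod ν) :=
          integral_congr_ae (Filter.Eventually.of_forall fun p => hωus p.1 p.2)
  -- integrabilities
  have hfint : Integrable f ν := by
    have := hI1.integral_prod_left
    simpa only [Function.uncurry_apply_pair, hωu] using this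
  have hWff : Integrable (fun p : ℝ × ℝ => w p.1 p.2 * (f p.1 * f p.2)) (ν.prod ν) := by
    have := hI2.integral_prod_left
    have h2 : (fun p : ℝ × ℝ => ∫ ω, h p.1 ω * h p.2 ω ∂μ)
        = fun p : ℝ × ℝ => w p.1 p.2 * (f p.1 * f p.2) := funext fun p => hωus p.1 p.2
    rwa [h2] at this
  have hff : Integrable (fun p : ℝ × ℝ => f p.1 * f p.2) (ν.prod ν) :=
    hfint.mul_prod hfint
  -- Memℒp
  have hIint : Integrable I μ := hI1.integral_prod_right
  have hIsq : Integrable (fun ω => I ω ^ 2) μ := by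
    have := hI2.integral_prod_right
    have h2 : (fun ω => ∫ p : ℝ × ℝ, h p.1 ω * h p.2 ω ∂(ν.prod ν)) = fun ω => I ω ^ 2 :=
      funext fun ω => (hsq ω).symm
    rwa [h2] at this
  have hmem : MemLp I 2 μ :=
    (memLp_two_iff_integrable_sq hIint.aestronglyMeasurable).2 hIsq
  have hmemF : MemLp (fun ω => c * I ω) 2 μ := hmem.const_mul c
  -- variance
  rw [show (fun ω => c * (∫ u in τ₁..τ₂, h u ω)) = fun ω => c * I ω from
    funext fun ω => by rw [hI, hIcc]]
  rw [variance_eq_sub hmemF]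
  have e1 : (∫ ω, (fun ω => c * I ω) ω ^ 2 ∂μ) = c ^ 2 * ∫ p : ℝ × ℝ, w p.1 p.2 * (f p.1 * f p.2) ∂(ν.prod ν) := by
    simp only [mul_pow]
    rw [integral_const_mul, hsec]
  have e2 : (∫ ω, (fun ω => c * I ω) ω ∂μ) = c * ∫ u, f u ∂ν := by
    rw [integral_const_mul, hmean]
  simp only [Pi.pow_apply] at *
  rw [e1, e2]
  -- RHS
  have hRHS : (∫ u in τ₁..τ₂, ∫ s in τ₁..τ₂, (w u s - 1) * (f u * f s))
      = ∫ p : ℝ × ℝ, (w p.1 p.2 - 1) * (f p.1 * f p.2) ∂(ν.prod ν) := by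
    rw [hIcc]
    have : (∀ u, (∫ s in τ₁..τ₂, (w u s - 1) * (f u * f s)) = ∫ s, (w u s - 1) * (f u * f s) ∂ν) :=
      fun u => hIcc _
    simp only [this]
    have heq : (fun p : ℝ × ℝ => (w p.1 p.2 - 1) * (f p.1 * f p.2))
        = fun p => w p.1 p.2 * (f p.1 * f p.2) - f p.1 * f p.2 := by
      funext p; ring
    have hint : Integrable (fun p : ℝ × ℝ => (w p.1 p.2 - 1) * (f p.1 * f p.2)) (ν.prod ν) := by
      rw [heq]; exact hWff.sub hff
    exact (integral_prod (fun p : ℝ × ℝ => (w p.1 p.2 - 1) * (f p.1 * f p.2)) hint).symm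
  rw [hRHS]
  have hsplit : (∫ p : ℝ × ℝ, (w p.1 p.2 - 1) * (f p.1 * f p.2) ∂(ν.prod ν))
      = (∫ p : ℝ × ℝ, w p.1 p.2 * (f p.1 * f p.2) ∂(ν.prod ν))
        - ∫ p : ℝ × ℝ, f p.1 * f p.2 ∂(ν.prod ν) := by
    rw [← integral_sub hWff hff]
    congr 1; funext p; ring
  rw [hsplit, integral_prod_mul f f]
  ring
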